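/- arXiv:1412.6231 — 2 statements merged into one kernel-verified Lean document; each statement's English description precedes it below -/
import Mathlib

section
/- For every d ∈ ℕ, d ≥ 1, and all x, y ∈ ℝ^d with x ≠ 0 and y ≠ 0, the MpCN proposal density satisfies the detailed-balance identity ‖x‖^{-d}·r(x,y) = ‖y‖^{-d}·r(y,x); consequently the MpCN proposal transition kernel R(x,dy) = r(x,y)dy is reversible with respect to the σ-finite measure ‖x‖^{-d}dx on ℝ^d. -/
set_option maxHeartbeats 1000000


open MeasureTheory ENNReal Filter Topology

noncomputable section

/-- The state space in dimension `d`: `d`-dimensional Euclidean space. -/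
abbrev Euc (d : ℕ) : Type := EuclideanSpace ℝ (Fin d)

/-- The inverse-Gamma(ν, α) probability density function. -/
def invGammaPdf (ν α z : ℝ) : ℝ :=
  α ^ ν / Real.Gamma ν * z ^ (-ν - 1) * Real.exp (-α / z)

/-- The MpCN proposal density
`r(x,y) = ∫₀^∞ g(z; d/2, ‖x‖²/2) (2π(1-ρ)z)^{-d/2} exp(-‖y - √ρ·x‖²/(2(1-ρ)z)) dz`. -/
def mpcnPropDen (ρ : ℝ) (d : ℕ) (x y : Euc d) : ℝ :=
  ∫ z in Set.Ioi (0 : ℝ),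
    invGammaPdf ((d : ℝ) / 2) (‖x‖ ^ 2 / 2) z *
      ((2 * Real.pi * (1 - ρ) * z) ^ (-(d : ℝ) / 2) *
        Real.exp (-‖y - Real.sqrt ρ • x‖ ^ 2 / (2 * (1 - ρ) * z)))

/-- The MpCN acceptance probability for target density `p`. -/
def mpcnAccept (d : ℕ) (p : Euc d → ℝ) (x y : Euc d) : ℝ :=
  min 1 ((p y * ‖x‖ ^ (-(d : ℝ))) / (p x * ‖y‖ ^ (-(d : ℝ))))

/-- The MpCN transition kernel for target density `p`, as a measure-valued map. -/
def mpcnKernel (ρ : ℝ) (d : ℕ) (p : Euc d → ℝ) (x : Euc d) : Measure (Euc d) :=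
  volume.withDensity (fun y => ENNReal.ofReal (mpcnAccept d p x y * mpcnPropDen ρ d x y)) +
    (1 - ∫⁻ y, ENNReal.ofReal (mpcnAccept d p x y * mpcnPropDen ρ d x y)) • Measure.dirac x

/-- Pointwise symmetry of the MpCN integrand. -/
lemma mpcn_integrand_eq (ρ : ℝ) (hρ0 : 0 ≤ ρ) (hρ1 : ρ < 1) (d : ℕ)
    (x y : Euc d) (hx : x ≠ 0) {z : ℝ} (hz : 0 < z) :
    ‖x‖ ^ (-(d : ℝ)) * (invGammaPdf ((d : ℝ) / 2) (‖x‖ ^ 2 / 2) z *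
      ((2 * Real.pi * (1 - ρ) * z) ^ (-(d : ℝ) / 2) *
        Real.exp (-‖y - Real.sqrt ρ • x‖ ^ 2 / (2 * (1 - ρ) * z)))) =
    (2 : ℝ) ^ (-(d : ℝ) / 2) / Real.Gamma ((d : ℝ) / 2) *
      (z ^ (-(d : ℝ) / 2 - 1) * ((2 * Real.pi * (1 - ρ) * z) ^ (-(d : ℝ) / 2) *
        Real.exp (-(‖x‖ ^ 2 + ‖y‖ ^ 2 - 2 * Real.sqrt ρ * (inner ℝ x y : ℝ)) /
          (2 * (1 - ρ) * z)))) := by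
  have hn : (0 : ℝ) < ‖x‖ := norm_pos_iff.mpr hx
  have h1ρ : (1 : ℝ) - ρ ≠ 0 := by linarith
  have h1 : ‖x‖ ^ (-(d : ℝ)) * (‖x‖ ^ 2 / 2) ^ ((d : ℝ) / 2) = (2 : ℝ) ^ (-(d : ℝ) / 2) := by
    have e1 : ((‖x‖ ^ 2 : ℝ)) ^ ((d : ℝ) / 2) = ‖x‖ ^ (d : ℝ) := by
      rw [← Real.rpow_natCast ‖x‖ 2, ← Real.rpow_mul hn.le]
      congr 1
      push_cast
      ring_nf
    rw [Real.div_rpow (by positivity) (by norm_num), e1, Real.rpow_neg hn.le, neg_div,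
      Real.rpow_neg (by norm_num : (0:ℝ) ≤ 2), div_eq_mul_inv, ← mul_assoc,
      inv_mul_cancel₀ (Real.rpow_pos_of_pos hn (d : ℝ)).ne', one_mul]
  have h2 : Real.exp (-(‖x‖ ^ 2 / 2) / z) *
      Real.exp (-‖y - Real.sqrt ρ • x‖ ^ 2 / (2 * (1 - ρ) * z)) =
      Real.exp (-(‖x‖ ^ 2 + ‖y‖ ^ 2 - 2 * Real.sqrt ρ * (inner ℝ x y : ℝ)) /
        (2 * (1 - ρ) * z)) := by
    rw [← Real.exp_add]
    congr 1
    have hnorm : ‖y - Real.sqrt ρ • x‖ ^ 2 =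
        ‖y‖ ^ 2 - 2 * (Real.sqrt ρ * (inner ℝ x y : ℝ)) + ρ * ‖x‖ ^ 2 := by
      rw [norm_sub_sq_real, real_inner_smul_right, norm_smul]
      rw [Real.norm_eq_abs, abs_of_nonneg (Real.sqrt_nonneg ρ), mul_pow, Real.sq_sqrt hρ0,
        real_inner_comm y x]
    rw [hnorm]
    field_simp
    ring_nf
  calc ‖x‖ ^ (-(d : ℝ)) * (invGammaPdf ((d : ℝ) / 2) (‖x‖ ^ 2 / 2) z *
      ((2 * Real.pi * (1 - ρ) * z) ^ (-(d : ℝ) / 2) *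
        Real.exp (-‖y - Real.sqrt ρ • x‖ ^ 2 / (2 * (1 - ρ) * z))))
      = (‖x‖ ^ (-(d : ℝ)) * (‖x‖ ^ 2 / 2) ^ ((d : ℝ) / 2)) / Real.Gamma ((d : ℝ) / 2) *
        (z ^ (-(d : ℝ) / 2 - 1) * ((2 * Real.pi * (1 - ρ) * z) ^ (-(d : ℝ) / 2) *
          (Real.exp (-(‖x‖ ^ 2 / 2) / z) *
            Real.exp (-‖y - Real.sqrt ρ • x‖ ^ 2 / (2 * (1 - ρ) * z))))) := by
        unfold invGammaPdf; ring_nf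
    _ = _ := by rw [h1, h2]

/-- Part 1: detailed balance pointwise. -/
lemma mpcn_db (ρ : ℝ) (hρ : ρ ∈ Set.Ioo (0 : ℝ) 1) (d : ℕ) (x y : Euc d)
    (hx : x ≠ 0) (hy : y ≠ 0) :
    ‖x‖ ^ (-(d : ℝ)) * mpcnPropDen ρ d x y = ‖y‖ ^ (-(d : ℝ)) * mpcnPropDen ρ d y x := by
  unfold mpcnPropDen
  rw [← integral_const_mul, ← integral_const_mul]
  refine setIntegral_congr_fun measurableSet_Ioi (fun z hz => ?_)
  rw [mpcn_integrand_eq ρ hρ.1.le hρ.2 d x y hx hz,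
    mpcn_integrand_eq ρ hρ.1.le hρ.2 d y x hy hz]
  have h : ‖x‖ ^ 2 + ‖y‖ ^ 2 - 2 * Real.sqrt ρ * (inner ℝ x y : ℝ) =
      ‖y‖ ^ 2 + ‖x‖ ^ 2 - 2 * Real.sqrt ρ * (inner ℝ y x : ℝ) := by
    rw [real_inner_comm]; ring
  rw [h]

/-- Joint measurability of the MpCN proposal density. -/
lemma mpcn_meas (ρ : ℝ) (d : ℕ) :
    Measurable (fun p : Euc d × Euc d => mpcnPropDen ρ d p.1 p.2) := by
  have h : StronglyMeasurable (fun q : (Euc d × Euc d) × ℝ =>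
      invGammaPdf ((d : ℝ) / 2) (‖q.1.1‖ ^ 2 / 2) q.2 *
        ((2 * Real.pi * (1 - ρ) * q.2) ^ (-(d : ℝ) / 2) *
          Real.exp (-‖q.1.2 - Real.sqrt ρ • q.1.1‖ ^ 2 / (2 * (1 - ρ) * q.2)))) := by
    apply Measurable.stronglyMeasurable
    unfold invGammaPdf
    fun_prop
  exact (MeasureTheory.StronglyMeasurable.integral_prod_right'
    (ν := volume.restrict (Set.Ioi 0)) h).measurable

/-- Joint measurability of the swapped MpCN proposal density. -/
lemma mpcn_meas_swap (ρ : ℝ) (d : ℕ) :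
    Measurable (fun p : Euc d × Euc d => mpcnPropDen ρ d p.2 p.1) := by
  have h : StronglyMeasurable (fun q : (Euc d × Euc d) × ℝ =>
      invGammaPdf ((d : ℝ) / 2) (‖q.1.2‖ ^ 2 / 2) q.2 *
        ((2 * Real.pi * (1 - ρ) * q.2) ^ (-(d : ℝ) / 2) *
          Real.exp (-‖q.1.1 - Real.sqrt ρ • q.1.2‖ ^ 2 / (2 * (1 - ρ) * q.2)))) := by
    apply Measurable.stronglyMeasurable
    unfold invGammaPdf
    fun_prop
  exact (MeasureTheory.StronglyMeasurable.integral_prod_right'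
    (ν := volume.restrict (Set.Ioi 0)) h).measurable

/-- Nonnegativity of the MpCN proposal density. -/
lemma mpcn_nonneg (ρ : ℝ) (hρ : ρ < 1) (d : ℕ) (hd : 1 ≤ d) (x y : Euc d) :
    0 ≤ mpcnPropDen ρ d x y := by
  apply setIntegral_nonneg measurableSet_Ioi
  intro z hz
  have hz' : (0 : ℝ) < z := hz
  have hd' : (0 : ℝ) < (d : ℝ) / 2 := by
    have : (1 : ℝ) ≤ (d : ℝ) := by exact_mod_cast hd
    linarith
  have hΓ : 0 < Real.Gamma ((d : ℝ) / 2) := Real.Gamma_pos_of_pos hd'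
  have h1ρ : (0 : ℝ) ≤ 1 - ρ := by linarith
  unfold invGammaPdf
  have A : 0 ≤ (‖x‖ ^ 2 / 2) ^ ((d : ℝ) / 2) / Real.Gamma ((d : ℝ) / 2) :=
    div_nonneg (Real.rpow_nonneg (by positivity) _) hΓ.le
  have B : 0 ≤ z ^ (-((d : ℝ) / 2) - 1) := Real.rpow_nonneg hz'.le _
  have C : 0 ≤ (2 * Real.pi * (1 - ρ) * z) ^ (-(d : ℝ) / 2) :=
    Real.rpow_nonneg (mul_nonneg (mul_nonneg (by positivity) h1ρ) hz'.le) _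
  exact mul_nonneg (mul_nonneg (mul_nonneg A B) (Real.exp_nonneg _))
    (mul_nonneg C (Real.exp_nonneg _))

/-- The MpCN proposal density satisfies the detailed-balance identity
`‖x‖^{-d} r(x,y) = ‖y‖^{-d} r(y,x)`, and consequently the MpCN proposal transition
kernel `R(x,dy) = r(x,y) dy` is reversible with respect to the σ-finite measure
`‖x‖^{-d} dx` on `ℝ^d`. -/
theorem mpcn_proposal_detailed_balance (ρ : ℝ) (hρ : ρ ∈ Set.Ioo (0 : ℝ) 1)
    (d : ℕ) (hd : 1 ≤ d) :
    (∀ x y : Euc d, x ≠ 0 → y ≠ 0 →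
      ‖x‖ ^ (-(d : ℝ)) * mpcnPropDen ρ d x y = ‖y‖ ^ (-(d : ℝ)) * mpcnPropDen ρ d y x) ∧
    (∀ A B : Set (Euc d), MeasurableSet A → MeasurableSet B →
      ∫⁻ x in A, ENNReal.ofReal (‖x‖ ^ (-(d : ℝ))) *
          (∫⁻ y in B, ENNReal.ofReal (mpcnPropDen ρ d x y)) =
        ∫⁻ x in B, ENNReal.ofReal (‖x‖ ^ (-(d : ℝ))) *
          (∫⁻ y in A, ENNReal.ofReal (mpcnPropDen ρ d x y))) := by
  refine ⟨fun x y hx hy => mpcn_db ρ hρ d x y hx hy, fun A B hA hB => ?_⟩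
  haveI : Nonempty (Fin d) := ⟨⟨0, hd⟩⟩
  haveI : Nontrivial (Euc d) := by
    refine ⟨0, EuclideanSpace.single ⟨0, hd⟩ (1 : ℝ), fun h => ?_⟩
    have h2 : ‖EuclideanSpace.single (⟨0, hd⟩ : Fin d) (1 : ℝ)‖ = 0 := by
      rw [← h]; simp
    rw [EuclideanSpace.norm_single] at h2
    norm_num at h2
  have hzero : (volume : Measure (Euc d)) {(0 : Euc d)} = 0 := measure_singleton 0
  have hae : ∀ S : Set (Euc d), ∀ᵐ x ∂(volume.restrict S), x ≠ 0 := by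
    intro S
    refine ae_restrict_of_ae ?_
    have hs : {x : Euc d | ¬ x ≠ 0} = {0} := by ext u; simp
    rw [ae_iff, hs]
    exact hzero
  -- turn a constant times an inner integral into a single inner integral
  have hmain : ∀ (S : Set (Euc d)) (u : Euc d),
      ENNReal.ofReal (‖u‖ ^ (-(d : ℝ))) * (∫⁻ v in S, ENNReal.ofReal (mpcnPropDen ρ d u v)) =
      ∫⁻ v in S, ENNReal.ofReal (‖u‖ ^ (-(d : ℝ)) * mpcnPropDen ρ d u v) := by
    intro S u
    rw [← lintegral_const_mul' _ _ ENNReal.ofReal_ne_top]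
    refine lintegral_congr fun v => ?_
    rw [ENNReal.ofReal_mul (Real.rpow_nonneg (norm_nonneg u) _)]
  have hGmeas : AEMeasurable
      (Function.uncurry fun (x y : Euc d) =>
        ENNReal.ofReal (‖y‖ ^ (-(d : ℝ)) * mpcnPropDen ρ d y x))
      ((volume.restrict A).prod (volume.restrict B)) := by
    apply Measurable.aemeasurable
    have h1 : Measurable fun p : Euc d × Euc d => ‖p.2‖ ^ (-(d : ℝ)) := by fun_prop
    have h2 : Measurable fun p : Euc d × Euc d => mpcnPropDen ρ d p.2 p.1 :=
      mpcn_meas_swap ρ d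
    exact ENNReal.measurable_ofReal.comp (h1.mul h2)
  calc ∫⁻ x in A, ENNReal.ofReal (‖x‖ ^ (-(d : ℝ))) *
          (∫⁻ y in B, ENNReal.ofReal (mpcnPropDen ρ d x y))
      = ∫⁻ x in A, ∫⁻ y in B, ENNReal.ofReal (‖x‖ ^ (-(d : ℝ)) * mpcnPropDen ρ d x y) :=
        lintegral_congr fun x => hmain B x
    _ = ∫⁻ x in A, ∫⁻ y in B, ENNReal.ofReal (‖y‖ ^ (-(d : ℝ)) * mpcnPropDen ρ d y x) := by
        refine lintegral_congr_ae ?_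
        filter_upwards [hae A] with x hx
        refine lintegral_congr_ae ?_
        filter_upwards [hae B] with y hy
        rw [mpcn_db ρ hρ d x y hx hy]
    _ = ∫⁻ y in B, ∫⁻ x in A, ENNReal.ofReal (‖y‖ ^ (-(d : ℝ)) * mpcnPropDen ρ d y x) :=
        lintegral_lintegral_swap hGmeas
    _ = ∫⁻ x in B, ENNReal.ofReal (‖x‖ ^ (-(d : ℝ))) *
          (∫⁻ y in A, ENNReal.ofReal (mpcnPropDen ρ d x y)) :=
        lintegral_congr fun y => (hmain A y).symm
end
end

section
/- Let q : (0,∞) → (0,∞) be a strictly positive measurable function with ∫_0^∞ q(u) du ≤ 1. Then for every c ∈ (0,∞), ∫_c^∞ 1/(u²·q(u)) du = +∞ and ∫_0^c 1/(u²·q(u)) du = +∞. Consequently, the scale function s(x) = ∫_c^x 1/(u²·q(u)) du satisfies s(x) → +∞ as x → +∞ and s(x) → −∞ as x → 0+. -/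
open MeasureTheory ENNReal Filter Topology

noncomputable section

/-- Monotone union: set-lintegral over the union is the sup of set-lintegrals. -/
lemma my_lintegral_iUnion_mono (g : ℝ → ℝ≥0∞) (hg : Measurable g)
    (S : ℕ → Set ℝ) (hSm : ∀ n, MeasurableSet (S n)) (hmono : Monotone S) :
    ∫⁻ u in ⋃ n, S n, g u = ⨆ n, ∫⁻ u in S n, g u := by
  have h1 : ∀ n, ∫⁻ u in S n, g u = ∫⁻ u, (S n).indicator g u := fun n =>
    (lintegral_indicator (hSm n) g).symm
  have h2 : ∫⁻ u in ⋃ n, S n, g u = ∫⁻ u, (⋃ n, S n).indicator g u :=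
    (lintegral_indicator (MeasurableSet.iUnion hSm) g).symm
  rw [h2]
  simp only [h1]
  rw [← lintegral_iSup (fun n => hg.indicator (hSm n))
      (fun m n hmn => Set.indicator_le_indicator_of_subset (hmono hmn) (fun _ => zero_le))]
  congr 1
  ext x
  exact (Set.indicator_iUnion_apply (M := ℝ≥0∞) rfl _ _ _)

/-- `∫⁻ 1/u` diverges on `(c, ∞)`. -/
lemma my_lintegral_inv_Ioi_top {c : ℝ} (hc : 0 < c) :
    ∫⁻ u in Set.Ioi c, ENNReal.ofReal u⁻¹ = ⊤ := by
  by_contra h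
  have hne : ∫⁻ u in Set.Ioi c, ENNReal.ofReal u⁻¹ < ⊤ := lt_top_iff_ne_top.2 h
  have hnonneg : 0 ≤ᵐ[volume.restrict (Set.Ioi c)] fun u : ℝ => u⁻¹ := by
    filter_upwards [ae_restrict_mem measurableSet_Ioi] with x hx
    exact inv_nonneg.2 (hc.trans hx).le
  have hint : IntegrableOn (fun u : ℝ => u⁻¹) (Set.Ioi c) :=
    ⟨measurable_inv.aestronglyMeasurable, (hasFiniteIntegral_iff_ofReal hnonneg).2 hne⟩
  have hint' : IntegrableOn (fun u : ℝ => u ^ (-1 : ℝ)) (Set.Ioi c) := by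
    apply hint.congr_fun ?_ measurableSet_Ioi
    intro x hx
    show x⁻¹ = x ^ (-1 : ℝ)
    rw [Real.rpow_neg (hc.trans hx).le, Real.rpow_one]
  rw [integrableOn_Ioi_rpow_iff hc] at hint'
  linarith

/-- `∫⁻ 1/u` diverges on `(0, c)`. -/
lemma my_lintegral_inv_Ioo_top {c : ℝ} (hc : 0 < c) :
    ∫⁻ u in Set.Ioo 0 c, ENNReal.ofReal u⁻¹ = ⊤ := by
  by_contra h
  have hne : ∫⁻ u in Set.Ioo 0 c, ENNReal.ofReal u⁻¹ < ⊤ := lt_top_iff_ne_top.2 h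
  have hnonneg : 0 ≤ᵐ[volume.restrict (Set.Ioo 0 c)] fun u : ℝ => u⁻¹ := by
    filter_upwards [ae_restrict_mem measurableSet_Ioo] with x hx
    exact inv_nonneg.2 hx.1.le
  have hint : IntegrableOn (fun u : ℝ => u⁻¹) (Set.Ioo 0 c) :=
    ⟨measurable_inv.aestronglyMeasurable, (hasFiniteIntegral_iff_ofReal hnonneg).2 hne⟩
  have hint' : IntegrableOn (fun u : ℝ => u ^ (-1 : ℝ)) (Set.Ioo 0 c) := by
    apply hint.congr_fun ?_ measurableSet_Ioo
    intro x hx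
    show x⁻¹ = x ^ (-1 : ℝ)
    rw [Real.rpow_neg hx.1.le, Real.rpow_one]
  rw [intervalIntegral.integrableOn_Ioo_rpow_iff hc] at hint'
  linarith

/-- If `q : (0,∞) → (0,∞)` is measurable, strictly positive and
`∫₀^∞ q ≤ 1`, then for every `c > 0` the scale-function integrand `1/(u² q(u))` has
divergent integral both on `(c,∞)` and on `(0,c)`; consequently the scale function
`s(x) = ∫_c^x du/(u² q(u))` tends to `+∞` as `x → +∞` and to `-∞` as `x → 0+`
(equivalently, `∫_{(c,x]} → ∞` as `x → ∞` and `∫_{(x,c]} → ∞` as `x → 0+`). -/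
theorem scale_function_diverges (q : ℝ → ℝ) (hq_meas : Measurable q)
    (hq_pos : ∀ u, 0 < u → 0 < q u)
    (hq_int : ∫⁻ u in Set.Ioi (0 : ℝ), ENNReal.ofReal (q u) ≤ 1) :
    ∀ c : ℝ, 0 < c →
      (∫⁻ u in Set.Ioi c, ENNReal.ofReal (1 / (u ^ 2 * q u)) = ⊤) ∧
      (∫⁻ u in Set.Ioo 0 c, ENNReal.ofReal (1 / (u ^ 2 * q u)) = ⊤) ∧
      Tendsto (fun x : ℝ => ∫⁻ u in Set.Ioc c x, ENNReal.ofReal (1 / (u ^ 2 * q u)))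
        atTop (𝓝 ⊤) ∧
      Tendsto (fun x : ℝ => ∫⁻ u in Set.Ioc x c, ENNReal.ofReal (1 / (u ^ 2 * q u)))
        (𝓝[>] 0) (𝓝 ⊤) := by
  intro c hc
  set g : ℝ → ℝ≥0∞ := fun u => ENNReal.ofReal (1 / (u ^ 2 * q u)) with hg_def
  have hg_meas : Measurable g :=
    (measurable_const.div ((measurable_id.pow_const 2).mul hq_meas)).ennreal_ofReal
  -- key divergence lemma on any measurable S ⊆ (0,∞) where ∫ 1/u = ⊤
  have key : ∀ S : Set ℝ, MeasurableSet S → S ⊆ Set.Ioi (0 : ℝ) →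
      (∫⁻ u in S, ENNReal.ofReal u⁻¹ = ⊤) → ∫⁻ u in S, g u = ⊤ := by
    intro S hSm hSsub hStop
    have hpt : ∀ᵐ u ∂(volume.restrict S),
        2 * ENNReal.ofReal u⁻¹ ≤ ENNReal.ofReal (q u) + g u := by
      filter_upwards [ae_restrict_mem hSm] with u hu
      have hu0 : 0 < u := hSsub hu
      have hq0 : 0 < q u := hq_pos u hu0
      have hineq : 2 * u⁻¹ ≤ q u + 1 / (u ^ 2 * q u) := by
        rw [← sub_nonneg]
        have heq : q u + 1 / (u ^ 2 * q u) - 2 * u⁻¹ = (u * q u - 1) ^ 2 / (u ^ 2 * q u) := by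
          field_simp
          ring
        rw [heq]
        positivity
      calc 2 * ENNReal.ofReal u⁻¹ = ENNReal.ofReal (2 * u⁻¹) := by
            rw [ENNReal.ofReal_mul (by norm_num)]; norm_num
        _ ≤ ENNReal.ofReal (q u + 1 / (u ^ 2 * q u)) := ENNReal.ofReal_le_ofReal hineq
        _ = ENNReal.ofReal (q u) + g u := ENNReal.ofReal_add hq0.le (by positivity)
    have hle : ∫⁻ u in S, 2 * ENNReal.ofReal u⁻¹ ∂volume ≤
        ∫⁻ u in S, (ENNReal.ofReal (q u) + g u) ∂volume := lintegral_mono_ae hpt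
    have hL : ∫⁻ u in S, 2 * ENNReal.ofReal u⁻¹ = ⊤ := by
      rw [lintegral_const_mul 2 measurable_inv.ennreal_ofReal, hStop]
      simp
    have hR : ∫⁻ u in S, (ENNReal.ofReal (q u) + g u) ≤ 1 + ∫⁻ u in S, g u := by
      rw [lintegral_add_left hq_meas.ennreal_ofReal]
      gcongr
      calc ∫⁻ u in S, ENNReal.ofReal (q u) ≤ ∫⁻ u in Set.Ioi (0:ℝ), ENNReal.ofReal (q u) :=
            lintegral_mono_set hSsub
        _ ≤ 1 := hq_int
    have htop : (1 : ℝ≥0∞) + ∫⁻ u in S, g u = ⊤ :=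
      top_le_iff.1 (hL ▸ hle.trans hR)
    rcases ENNReal.add_eq_top.1 htop with h | h
    · exact absurd h (by norm_num)
    · exact h
  have hIoi : ∫⁻ u in Set.Ioi c, g u = ⊤ :=
    key _ measurableSet_Ioi (fun x hx => hc.trans hx) (my_lintegral_inv_Ioi_top hc)
  have hIoo : ∫⁻ u in Set.Ioo 0 c, g u = ⊤ :=
    key _ measurableSet_Ioo (fun x hx => hx.1) (my_lintegral_inv_Ioo_top hc)
  refine ⟨hIoi, hIoo, ?_, ?_⟩
  · -- tendsto atTop
    rw [ENNReal.tendsto_nhds_top_iff_nnreal]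
    intro M
    have hsub : Set.Ioi c ⊆ ⋃ n : ℕ, Set.Ioc c (c + n) := by
      intro x hx
      obtain ⟨n, hn⟩ := exists_nat_ge (x - c)
      exact Set.mem_iUnion.2 ⟨n, hx, by linarith⟩
    have hsup : (⊤ : ℝ≥0∞) ≤ ⨆ n : ℕ, ∫⁻ u in Set.Ioc c (c + n), g u := by
      rw [← my_lintegral_iUnion_mono g hg_meas _ (fun n => measurableSet_Ioc)
        (fun m n hmn => Set.Ioc_subset_Ioc le_rfl (by
          simpa using (Nat.cast_le (α := ℝ)).2 hmn))]
      exact hIoi ▸ lintegral_mono_set hsub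
    have hM : (M : ℝ≥0∞) < ⨆ n : ℕ, ∫⁻ u in Set.Ioc c (c + n), g u :=
      lt_of_lt_of_le ENNReal.coe_lt_top hsup
    obtain ⟨n, hn⟩ := lt_iSup_iff.1 hM
    filter_upwards [eventually_ge_atTop (c + n)] with x hx
    exact hn.trans_le (lintegral_mono_set (Set.Ioc_subset_Ioc le_rfl hx))
  · -- tendsto at 0+
    rw [ENNReal.tendsto_nhds_top_iff_nnreal]
    intro M
    have hsub : Set.Ioo 0 c ⊆ ⋃ n : ℕ, Set.Ioc (c / (n + 1)) c := by
      intro x hx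
      obtain ⟨n, hn⟩ := exists_nat_gt (c / x)
      refine Set.mem_iUnion.2 ⟨n, ?_, hx.2.le⟩
      rw [div_lt_iff₀ (by positivity)]
      have hcn : c < (n : ℝ) * x := (div_lt_iff₀ hx.1).1 hn
      nlinarith [hx.1]
    have hmono : Monotone (fun n : ℕ => Set.Ioc (c / (n + 1)) c) := by
      intro m n hmn
      apply Set.Ioc_subset_Ioc _ le_rfl
      apply div_le_div_of_nonneg_left hc.le (by positivity)
      simp only [add_le_add_iff_right, Nat.cast_le]
      exact_mod_cast hmn
    have hsup : (⊤ : ℝ≥0∞) ≤ ⨆ n : ℕ, ∫⁻ u in Set.Ioc (c / (n + 1)) c, g u := by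
      rw [← my_lintegral_iUnion_mono g hg_meas _ (fun n => measurableSet_Ioc) hmono]
      exact hIoo ▸ lintegral_mono_set hsub
    have hM : (M : ℝ≥0∞) < ⨆ n : ℕ, ∫⁻ u in Set.Ioc (c / (n + 1)) c, g u :=
      lt_of_lt_of_le ENNReal.coe_lt_top hsup
    obtain ⟨n, hn⟩ := lt_iSup_iff.1 hM
    have hb : 0 < c / ((n : ℝ) + 1) := by positivity
    filter_upwards [Ioo_mem_nhdsGT_of_mem (Set.left_mem_Ico.2 hb)] with x hx
    exact hn.trans_le (lintegral_mono_set (Set.Ioc_subset_Ioc hx.2.le le_rfl))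
end
end
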